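/- Let T be an abelian regular subgroup of Aff(V) with associated radical algebra product (x·y = xδ(y)). Then the translation group N normalizes T if and only if x·y·z = 0 for all x, y, z ∈ V (the algebra has trivial threefold products). -/

import Mathlib

theorem stmt {F V : Type*} [Field F] [AddCommGroup V] [Module F V]
    (T : Subgroup (V ≃ᵃ[F] V))
    (hcomm : ∀ g ∈ T, ∀ h ∈ T, g * h = h * g)
    (hreg : ∀ v : V, ∃! g : V ≃ᵃ[F] V, g ∈ T ∧ g 0 = v)
    (τ : V → (V ≃ᵃ[F] V)) (hτT : ∀ x, τ x ∈ T) (hτ0 : ∀ x, τ x 0 = x)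
    (δ : V → Module.End F V)
    (hδ : ∀ x z, τ x z = z + δ x z + x)
    (N : Subgroup (V ≃ᵃ[F] V))
    (hN : ∀ g : V ≃ᵃ[F] V, g ∈ N ↔ ∃ x : V, ∀ z : V, g z = z + x) :
    (∀ n ∈ N, ∀ g ∈ T, n⁻¹ * g * n ∈ T) ↔ (∀ x y z : V, δ z (δ y x) = 0) := by
  -- cancellation helper
  have cancel : ∀ a b c : V, a + b = a + c → b = c := fun a b c h => by
    have h2 : b - c = 0 := by rw [← sub_eq_zero.mpr h]; abel
    exact sub_eq_zero.mp h2
  -- every element of T is τ of its value at 0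
  have hT_eq : ∀ g ∈ T, g = τ (g 0) := by
    intro g hg
    obtain ⟨u, _, huniq⟩ := hreg (g 0)
    exact (huniq g ⟨hg, rfl⟩).trans (huniq (τ (g 0)) ⟨hτT _, hτ0 _⟩).symm
  -- commutativity relation (*)
  have star : ∀ x y z : V, δ x (δ y z) + δ x y = δ y (δ x z) + δ y x := by
    intro x y z
    have h := hcomm (τ x) (hτT x) (τ y) (hτT y)
    have h2 : τ x (τ y z) = τ y (τ x z) := congrFun (congrArg (fun (g : V ≃ᵃ[F] V) => ⇑g) h) z
    rw [hδ y z, hδ x z, hδ x, hδ y] at h2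
    simp only [map_add] at h2
    apply cancel (z + δ y z + δ x z + x + y)
    rw [← sub_eq_zero] at h2 ⊢
    rw [← h2]; abel
  -- product relation (**)
  have dd : ∀ x y z : V, δ (y + δ x y + x) z = δ x z + δ y z + δ x (δ y z) := by
    intro x y z
    have hg : τ x * τ y ∈ T := mul_mem (hτT x) (hτT y)
    have hc : (τ x * τ y) 0 = y + δ x y + x := by
      show τ x (τ y 0) = _
      rw [hτ0, hδ]
    have heq := hT_eq _ hg
    rw [hc] at heq
    have hz : τ x (τ y z) = τ (y + δ x y + x) z :=
      congrFun (congrArg (fun (g : V ≃ᵃ[F] V) => ⇑g) heq) z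
    rw [hδ y z, hδ x, hδ (y + δ x y + x) z] at hz
    simp only [map_add] at hz
    symm
    apply cancel (z + y + δ x y + x)
    rw [← sub_eq_zero] at hz ⊢
    rw [← hz]; abel
  constructor
  · -- normalization implies trivial triple products
    intro hnorm
    have hA : ∀ (a v t : V), δ (δ a v + a) t = δ a t := by
      intro a v t
      set n : V ≃ᵃ[F] V := AffineEquiv.constVAdd F V v with hn
      have hnapp : ∀ z : V, n z = z + v := fun z => by
        simp [hn, add_comm]
      have hnN : n ∈ N := (hN n).mpr ⟨v, hnapp⟩
      have hc := hnorm n hnN (τ a) (hτT a)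
      have hform := hT_eq _ hc
      have hinv : ∀ u : V, n⁻¹ u = u - v := by
        intro u
        have h1 : n (u - v) = u := by rw [hnapp]; abel
        calc n⁻¹ u = n⁻¹ (n (u - v)) := by rw [h1]
          _ = u - v := n.symm_apply_apply _
      have happ : ∀ s : V, (n⁻¹ * τ a * n) s = s + δ a s + δ a v + a := by
        intro s
        show n⁻¹ (τ a (n s)) = _
        rw [hnapp, hδ, hinv, map_add]
        abel
      have h0 : (n⁻¹ * τ a * n) 0 = δ a v + a := by
        rw [happ, map_zero]; abel
      rw [h0] at hform
      have ht : (n⁻¹ * τ a * n) t = τ (δ a v + a) t :=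
        congrFun (congrArg (fun (g : V ≃ᵃ[F] V) => ⇑g) hform) t
      rw [happ, hδ] at ht
      symm
      apply cancel (t + δ a v + a)
      rw [← sub_eq_zero] at ht ⊢
      rw [← ht]; abel
    intro x y z
    have key : ∀ a b c : V, δ c (δ b a) = 0 := by
      intro a b c
      have h1 := star (δ b a + b) c 0
      have h2 := star b c 0
      rw [hA b a (δ c 0), hA b a c, hA b a 0] at h1
      rw [h2, map_add] at h1
      have h3 := cancel _ _ _ h1
      exact (right_eq_add.mp h3)
    exact key x y z
  · -- trivial triple products imply normalization
    intro H n hn g hg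
    obtain ⟨v, hv⟩ := (hN n).mp hn
    have hgx := hT_eq g hg
    set x := g 0 with hx
    have hw0 : ∀ z : V, δ (δ x v) z = 0 := by
      intro z
      have h1 := star (δ x v) z 0
      simp only [map_zero, zero_add] at h1
      rw [H v x z] at h1
      exact h1
    have hidx : ∀ t : V, δ (δ x v + x) t = δ x t := by
      intro t
      have h1 := dd x (δ x v) t
      rw [H v x x, add_zero, hw0 t, add_zero, map_zero, add_zero] at h1
      exact h1
    have hinv : ∀ u : V, n⁻¹ u = u - v := by
      intro u
      have h1 : n (u - v) = u := by rw [hv]; abel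
      calc n⁻¹ u = n⁻¹ (n (u - v)) := by rw [h1]
        _ = u - v := n.symm_apply_apply _
    have hfin : n⁻¹ * g * n = τ (δ x v + x) := by
      ext z
      show n⁻¹ (g (n z)) = _
      rw [hv, hgx, hδ x (z + v), hinv, map_add (δ x) z v, hδ (δ x v + x) z, hidx z]
      abel
    rw [hfin]
    exact hτT _
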